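/- Let A be a commutative ring containing ℚ, let N be a lattice, u ∈ Hom(N, ℤ), and let g ∈ A be a nilpotent element. Define the derivation D of the group algebra A[N] by D(z^p) = ⟨u, p⟩ · g · z^p. Then D is a nilpotent derivation, exp(D) := Σ_{k≥0} D^k/k! is a well-defined ring automorphism of A[N], and for every p ∈ N one has exp(D)(z^p) = z^p · exp(g)^{⟨u, p⟩}, where exp(g) = Σ_{k≥0} g^k/k! is a unit in A. -/

import Mathlib

open Finset in
theorem trunc_exp_mul {A:Type*} [CommRing A] [Algebra ℚ A] (M:ℕ) (a b : A)
  (h : ∀ j k : ℕ, M ≤ j + k → a^j * b^k = 0) :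
  (∑ i ∈ range M, ((i.factorial:ℚ))⁻¹ • a^i) * (∑ i ∈ range M, ((i.factorial:ℚ))⁻¹ • b^i)
  = ∑ i ∈ range M, ((i.factorial:ℚ))⁻¹ • (a+b)^i := by
  have hF : ∀ i t : ℕ, t ≤ i →
      ((i.factorial:ℚ))⁻¹ • (a ^ t * b ^ (i - t) * (i.choose t : A))
      = ((t.factorial:ℚ)⁻¹ * ((i-t).factorial:ℚ)⁻¹) • (a ^ t * b ^ (i - t)) := by
    intro i t ht
    have : ((i.choose t : ℕ) : A) = ((i.choose t : ℚ)) • (1:A) := by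
      push_cast [Algebra.smul_def]; ring
    rw [this, mul_smul_comm, smul_smul, mul_one]
    congr 1
    have := Nat.choose_mul_factorial_mul_factorial ht
    have h1 : (t.factorial : ℚ) ≠ 0 := by exact_mod_cast t.factorial_ne_zero
    have h2 : ((i-t).factorial : ℚ) ≠ 0 := by exact_mod_cast (i-t).factorial_ne_zero
    have h3 : (i.factorial : ℚ) ≠ 0 := by exact_mod_cast i.factorial_ne_zero
    field_simp
    push_cast [← this]; ring
  calc (∑ i ∈ range M, ((i.factorial:ℚ))⁻¹ • a^i) * (∑ i ∈ range M, ((i.factorial:ℚ))⁻¹ • b^i)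
      = ∑ j ∈ range M, ∑ k ∈ range M,
          ((j.factorial:ℚ)⁻¹ * (k.factorial:ℚ)⁻¹) • (a^j * b^k) := by
        rw [Finset.sum_mul_sum]
        exact Finset.sum_congr rfl fun j _ => Finset.sum_congr rfl fun k _ =>
          smul_mul_smul_comm _ _ _ _
    _ = ∑ p ∈ (range M ×ˢ range M).filter (fun p => p.1 + p.2 < M),
          ((p.1.factorial:ℚ)⁻¹ * (p.2.factorial:ℚ)⁻¹) • (a^p.1 * b^p.2) := by
        rw [← Finset.sum_product']
        refine (Finset.sum_filter_of_ne ?_).symm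
        intro p _ hne
        by_contra hlt
        exact hne (by rw [h p.1 p.2 (le_of_not_gt hlt), smul_zero])
    _ = ∑ s ∈ (range M).sigma (fun i => range (i+1)),
          ((s.2.factorial:ℚ)⁻¹ * ((s.1 - s.2).factorial:ℚ)⁻¹) • (a^s.2 * b^(s.1 - s.2)) := by
        refine Finset.sum_nbij' (fun p => ⟨p.1 + p.2, p.1⟩) (fun s => (s.2, s.1 - s.2)) ?_ ?_ ?_ ?_ ?_
        · intro p hp
          simp only [Finset.mem_filter, Finset.mem_product, Finset.mem_range] at hp
          simp [Finset.mem_sigma, Finset.mem_range, hp.2, Nat.lt_succ_of_le (Nat.le_add_right _ _)]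
        · intro s hs
          simp only [Finset.mem_sigma, Finset.mem_range, Nat.lt_succ_iff] at hs
          simp only [Finset.mem_filter, Finset.mem_product, Finset.mem_range]
          refine ⟨⟨lt_of_le_of_lt hs.2 hs.1, lt_of_le_of_lt (Nat.sub_le _ _) hs.1⟩, ?_⟩
          rw [Nat.add_sub_cancel' hs.2]; exact hs.1
        · intro p hp; simp
        · intro s hs
          simp only [Finset.mem_sigma, Finset.mem_range, Nat.lt_succ_iff] at hs
          simp [Nat.add_sub_cancel' hs.2]
        · intro p hp; simp
    _ = ∑ i ∈ range M, ∑ t ∈ range (i+1),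
          ((t.factorial:ℚ)⁻¹ * ((i-t).factorial:ℚ)⁻¹) • (a^t * b^(i-t)) := by
        rw [Finset.sum_sigma]
    _ = ∑ i ∈ range M, ((i.factorial:ℚ))⁻¹ • (a+b)^i := by
        refine Finset.sum_congr rfl fun i _ => ?_
        rw [add_pow, Finset.smul_sum]
        exact Finset.sum_congr rfl fun t ht =>
          (hF i t (Nat.lt_succ_iff.mp (Finset.mem_range.mp ht))).symm

/-- For a nilpotent `g` in a commutative ℚ-algebra `A` and `u ∈ Hom(N,ℤ)`, the
derivation `D(z^p) = ⟨u,p⟩·g·z^p` of `A[N]` is nilpotent, `exp D` is a ring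
automorphism, and `exp D (z^p) = exp(g)^{⟨u,p⟩}·z^p` where `exp g` is a unit of `A`. -/
theorem exp_of_nilpotent_log_derivation
    (A N : Type*) [CommRing A] [Algebra ℚ A] [AddCommGroup N]
    [Module.Free ℤ N] [Module.Finite ℤ N]
    (u : N →+ ℤ) (g : A) (hg : IsNilpotent g)
    (D : AddMonoidAlgebra A N →ₗ[A] AddMonoidAlgebra A N)
    (hD : ∀ p : N, D (AddMonoidAlgebra.single p 1) =
      (u p) • (g • AddMonoidAlgebra.single p (1 : A))) :
    ∃ M : ℕ, (D ^ M = 0) ∧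
      ∃ (E : AddMonoidAlgebra A N ≃+* AddMonoidAlgebra A N) (v : Aˣ),
        (∀ x, E x = ∑ i ∈ Finset.range M, ((i.factorial : ℚ)⁻¹) • ((D ^ i) x)) ∧
        ((v : A) = ∑ i ∈ Finset.range M, ((i.factorial : ℚ)⁻¹) • g ^ i) ∧
        (∀ p : N, E (AddMonoidAlgebra.single p 1) =
          ((v ^ (u p) : Aˣ) : A) • AddMonoidAlgebra.single p (1 : A)) := by
  classical
  obtain ⟨n, hn⟩ := hg
  set M := max n 1 with hM
  have hM1 : 1 ≤ M := le_max_right _ _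
  have hgM : g ^ M = 0 := by
    have : M = n + (M - n) := (Nat.add_sub_cancel' (le_max_left n 1)).symm
    rw [this, pow_add, hn, zero_mul]
  have hgk : ∀ k : ℕ, M ≤ k → g ^ k = 0 := by
    intro k hk
    have : k = M + (k - M) := (Nat.add_sub_cancel' hk).symm
    rw [this, pow_add, hgM, zero_mul]
  -- the scalar exponentials
  set e : ℤ → A := fun m => ∑ i ∈ Finset.range M, ((i.factorial:ℚ))⁻¹ • ((m:A) * g)^i with he_def
  have hmulzero : ∀ (m m' : ℤ) (j k : ℕ), M ≤ j + k →
      ((m:A)*g)^j * ((m':A)*g)^k = 0 := by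
    intro m m' j k hjk
    rw [mul_pow, mul_pow]
    calc (m:A)^j * g^j * ((m':A)^k * g^k) = (m:A)^j * (m':A)^k * (g^j * g^k) := by ring
      _ = 0 := by rw [← pow_add, hgk _ hjk, mul_zero]
  have he_mul : ∀ m m' : ℤ, e m * e m' = e (m + m') := by
    intro m m'
    have := trunc_exp_mul M ((m:A)*g) ((m':A)*g) (hmulzero m m')
    rw [he_def]
    simp only []
    rw [this]
    congr 1
    ext i
    congr 2
    push_cast
    ring
  have he_zero : e 0 = 1 := by
    rw [he_def]
    simp only [Int.cast_zero, zero_mul]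
    rw [Finset.sum_eq_single 0]
    · simp
    · intro i _ hi
      rw [zero_pow hi, smul_zero]
    · intro h; exact absurd (Finset.mem_range.mpr hM1) h
  -- the unit
  set v : Aˣ := ⟨e 1, e (-1), by rw [he_mul]; norm_num [he_zero],
    by rw [he_mul]; norm_num [he_zero]⟩ with hv_def
  have hv_coe : (v : A) = e 1 := rfl
  have hvz : ∀ m : ℤ, ((v ^ m : Aˣ) : A) = e m := by
    intro m
    induction m using Int.induction_on with
    | zero => rw [zpow_zero]; exact he_zero.symm
    | succ k ih =>
      rw [zpow_add_one, Units.val_mul, ih, hv_coe, he_mul]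
    | pred k ih =>
      rw [zpow_sub_one, Units.val_mul, ih]
      have : ((v⁻¹ : Aˣ) : A) = e (-1) := rfl
      rw [this, he_mul]
      congr 1
  -- powers of linear maps on singles
  have powsingle : ∀ (L : AddMonoidAlgebra A N →ₗ[A] AddMonoidAlgebra A N) (d : N → A),
      (∀ p a, L (AddMonoidAlgebra.single p a) = AddMonoidAlgebra.single p (d p * a)) →
      ∀ (i : ℕ) (p : N) (a : A),
        (L ^ i) (AddMonoidAlgebra.single p a) = AddMonoidAlgebra.single p ((d p)^i * a) := by
    intro L d hL i
    induction i with
    | zero => intro p a; simp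
    | succ i ih =>
      intro p a
      rw [pow_succ', Module.End.mul_apply, ih, hL]
      congr 1
      ring
  -- the action of D on singles
  have Dsingle : ∀ (p : N) (a : A),
      D (AddMonoidAlgebra.single p a) = AddMonoidAlgebra.single p (((u p : ℤ):A) * g * a) := by
    intro p a
    have h1 : (AddMonoidAlgebra.single p a : AddMonoidAlgebra A N)
        = a • AddMonoidAlgebra.single p 1 := by
      rw [AddMonoidAlgebra.smul_single', mul_one]
    rw [h1, map_smul, hD p]
    rw [smul_comm, AddMonoidAlgebra.smul_single, AddMonoidAlgebra.smul_single, AddMonoidAlgebra.smul_single]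
    congr 1
    rw [zsmul_eq_mul, smul_eq_mul, smul_eq_mul]
    ring
  have Dpow := powsingle D (fun p => ((u p : ℤ):A) * g) Dsingle
  -- D ^ M = 0
  have hDM0 : ∀ x : AddMonoidAlgebra A N, (D ^ M) x = 0 := by
    intro x
    induction x using AddMonoidAlgebra.induction_on with
    | of p =>
      show (D ^ M) (AddMonoidAlgebra.single p 1) = 0
      rw [Dpow M p 1]
      simp only [mul_pow, hgM, mul_zero, zero_mul, mul_one]
      exact AddMonoidAlgebra.single_zero p
    | add f h hf hh => rw [map_add, hf, hh, add_zero]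
    | smul r f hf => rw [map_smul, hf, smul_zero]
  have hDM : D ^ M = 0 := LinearMap.ext fun x => by rw [hDM0, LinearMap.zero_apply]
  -- truncated exponential of D
  set Ef : AddMonoidAlgebra A N → AddMonoidAlgebra A N :=
    fun x => ∑ i ∈ Finset.range M, ((i.factorial:ℚ))⁻¹ • (D ^ i) x with hEf
  set Ef' : AddMonoidAlgebra A N → AddMonoidAlgebra A N :=
    fun x => ∑ i ∈ Finset.range M, ((i.factorial:ℚ))⁻¹ • ((-D) ^ i) x with hEf'
  have Dpow' := powsingle (-D) (fun p => ((-u p : ℤ):A) * g) (by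
    intro p a
    rw [LinearMap.neg_apply, Dsingle, ← AddMonoidAlgebra.single_neg]
    congr 1
    push_cast
    ring)
  have single_sum : ∀ (p : N) (f : ℕ → A),
      (AddMonoidAlgebra.single p (∑ i ∈ Finset.range M, f i) : AddMonoidAlgebra A N)
        = ∑ i ∈ Finset.range M, AddMonoidAlgebra.single p (f i) :=
    fun p f => map_sum (AddMonoidAlgebra.singleAddHom p) f (Finset.range M)
  have Ef_single : ∀ (p : N) (a : A),
      Ef (AddMonoidAlgebra.single p a) = AddMonoidAlgebra.single p (e (u p) * a) := by
    intro p a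
    rw [hEf]
    simp only []
    rw [he_def]
    simp only []
    rw [Finset.sum_mul, single_sum]
    refine Finset.sum_congr rfl fun i _ => ?_
    rw [Dpow, AddMonoidAlgebra.smul_single, smul_mul_assoc]
  have Ef'_single : ∀ (p : N) (a : A),
      Ef' (AddMonoidAlgebra.single p a) = AddMonoidAlgebra.single p (e (-u p) * a) := by
    intro p a
    rw [hEf']
    simp only []
    rw [he_def]
    simp only []
    rw [Finset.sum_mul, single_sum]
    refine Finset.sum_congr rfl fun i _ => ?_
    rw [Dpow', AddMonoidAlgebra.smul_single, smul_mul_assoc]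
  have Ef_add : ∀ x y, Ef (x + y) = Ef x + Ef y := by
    intro x y
    rw [hEf]
    simp only [map_add, smul_add]
    rw [Finset.sum_add_distrib]
  have Ef'_add : ∀ x y, Ef' (x + y) = Ef' x + Ef' y := by
    intro x y
    rw [hEf']
    simp only [map_add, smul_add]
    rw [Finset.sum_add_distrib]
  have Ef_smul : ∀ (r : A) x, Ef (r • x) = r • Ef x := by
    intro r x
    rw [hEf]
    simp only [map_smul]
    rw [Finset.smul_sum]
    exact Finset.sum_congr rfl fun i _ => smul_comm _ _ _
  have Ef'_smul : ∀ (r : A) x, Ef' (r • x) = r • Ef' x := by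
    intro r x
    rw [hEf']
    simp only [map_smul]
    rw [Finset.smul_sum]
    exact Finset.sum_congr rfl fun i _ => smul_comm _ _ _
  have Ef_mul : ∀ x y, Ef (x * y) = Ef x * Ef y := by
    intro x y
    induction x using AddMonoidAlgebra.induction_on generalizing y with
    | of p =>
      induction y using AddMonoidAlgebra.induction_on with
      | of q =>
        rw [AddMonoidAlgebra.of_apply, AddMonoidAlgebra.of_apply]
        rw [AddMonoidAlgebra.single_mul_single, Ef_single, Ef_single, Ef_single,
            AddMonoidAlgebra.single_mul_single]
        congr 1
        rw [map_add u, ← he_mul]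
        ring
      | add f h hf hh => rw [mul_add, Ef_add, hf, hh, Ef_add, mul_add]
      | smul r f hf => rw [mul_smul_comm, Ef_smul, hf, Ef_smul, mul_smul_comm]
    | add f h hf hh =>
      rw [add_mul, Ef_add, hf, hh, Ef_add, add_mul]
    | smul r f hf =>
      rw [smul_mul_assoc, Ef_smul, hf, Ef_smul, smul_mul_assoc]
  have hlinv : ∀ x, Ef' (Ef x) = x := by
    intro x
    induction x using AddMonoidAlgebra.induction_on with
    | of p =>
      rw [AddMonoidAlgebra.of_apply, Ef_single, Ef'_single]
      rw [← mul_assoc, he_mul]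
      norm_num [he_zero]
    | add f h hf hh => rw [Ef_add, Ef'_add, hf, hh]
    | smul r f hf => rw [Ef_smul, Ef'_smul, hf]
  have hrinv : ∀ x, Ef (Ef' x) = x := by
    intro x
    induction x using AddMonoidAlgebra.induction_on with
    | of p =>
      rw [AddMonoidAlgebra.of_apply, Ef'_single, Ef_single]
      rw [← mul_assoc, he_mul]
      norm_num [he_zero]
    | add f h hf hh => rw [Ef'_add, Ef_add, hf, hh]
    | smul r f hf => rw [Ef'_smul, Ef_smul, hf]
  refine ⟨M, hDM,
    { toFun := Ef, invFun := Ef', left_inv := hlinv, right_inv := hrinv,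
      map_mul' := Ef_mul, map_add' := Ef_add }, v, fun x => rfl, ?_, ?_⟩
  · rw [hv_coe, he_def]
    simp
  · intro p
    show Ef (AddMonoidAlgebra.single p 1) = _
    rw [Ef_single, AddMonoidAlgebra.smul_single', hvz]
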